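/- Let φ: Y → R^k be a feature map on a finite set Y, let y, ŷ ∈ Y, let w ∈ R^k, α > 0, and ρ ∈ R^k. Define the margin m(y,y',u) = ⟨φ(y) - φ(y'), u⟩ and the Hamming distance H(y,y') = Σ_p |φ(y)_p - φ(y')_p|. If H(y,ŷ) - m(y,ŷ,w) < 0 and |ρ_p - αw_p| < α for every coordinate p with φ(y)_p ≠ φ(ŷ)_p, then m(y,ŷ,ρ) > 0, i.e., ⟨φ(y), ρ⟩ > ⟨φ(ŷ), ρ⟩. -/
import Mathlib


open scoped BigOperators

/-- Deterministic core of the Gaussian perturbation lemma: with margin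
`m(y,y',u) = Σ_p (φ(y)_p - φ(y')_p)·u_p` and Hamming distance
`H(y,y') = Σ_p |φ(y)_p - φ(y')_p|`, if `H(y,yh) - m(y,yh,w) < 0`, `α > 0`, and
`|ρ_p - α·w_p| < α` for every coordinate `p` with `φ(y)_p ≠ φ(yh)_p`,
then `⟨φ(y), ρ⟩ > ⟨φ(yh), ρ⟩`. -/
theorem stmt_14 {Y : Type*} {k : ℕ} (φ : Y → EuclideanSpace ℝ (Fin k))
    (y yh : Y) (w ρ : EuclideanSpace ℝ (Fin k)) (α : ℝ) (hα : 0 < α)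
    (hHm : (∑ p, |φ y p - φ yh p|) - (∑ p, (φ y p - φ yh p) * w p) < 0)
    (hρ : ∀ p, φ y p ≠ φ yh p → |ρ p - α * w p| < α) :
    ∑ p, φ yh p * ρ p < ∑ p, φ y p * ρ p := by
  have key : ∀ p : Fin k,
      α * ((φ y p - φ yh p) * w p) - α * |φ y p - φ yh p|
        ≤ (φ y p - φ yh p) * ρ p := by
    intro p
    by_cases h : φ y p = φ yh p
    · simp [h]
    · have h1 : |ρ p - α * w p| ≤ α := (hρ p h).le
      have h2 : (φ y p - φ yh p) * (ρ p - α * w p)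
          ≥ -(|φ y p - φ yh p| * |ρ p - α * w p|) := by
        have := abs_mul (φ y p - φ yh p) (ρ p - α * w p) ▸
          neg_abs_le ((φ y p - φ yh p) * (ρ p - α * w p))
        linarith
      have h3 : |φ y p - φ yh p| * |ρ p - α * w p| ≤ |φ y p - φ yh p| * α :=
        mul_le_mul_of_nonneg_left h1 (abs_nonneg _)
      nlinarith
  have hsum : α * (∑ p, (φ y p - φ yh p) * w p) - α * (∑ p, |φ y p - φ yh p|)
      ≤ ∑ p, (φ y p - φ yh p) * ρ p := by
    rw [Finset.mul_sum, Finset.mul_sum, ← Finset.sum_sub_distrib]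
    exact Finset.sum_le_sum fun p _ => key p
  have hpos : 0 < ∑ p, (φ y p - φ yh p) * ρ p := by
    nlinarith
  have : ∑ p, (φ y p - φ yh p) * ρ p
      = (∑ p, φ y p * ρ p) - ∑ p, φ yh p * ρ p := by
    rw [← Finset.sum_sub_distrib]; congr 1; ext p; ring
  linarith
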